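/- arXiv:1105.2391 — 2 statements merged into one kernel-verified Lean document; each statement's English description precedes it below -/
import Mathlib

section
/- (Lemma: spanning tree bound.) Let c : E → ℝ be any nonnegative edge cost. For every feasible solution x of the path-variant Held-Karp relaxation with respect to s and t, there exists a spanning tree H of the complete graph on V with c(H) ≤ c(x); in particular, the cost of a minimum spanning tree is at most c(x). -/
open Finset

namespace TSPPath

noncomputable section
open scoped Classical

/-- Edge set of the complete graph on `Fin n`: all unordered pairs of distinct vertices. -/
def Edges (n : ℕ) : Finset (Sym2 (Fin n)) := Finset.univ.filter (fun e => ¬ e.IsDiag)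

/-- `cutSet n S` is `δ(S)`: the edges with exactly one endpoint in `S`. -/
def cutSet (n : ℕ) (S : Finset (Fin n)) : Finset (Sym2 (Fin n)) :=
  (Edges n).filter (fun e => ∃ u v : Fin n, e = s(u, v) ∧ u ∈ S ∧ v ∉ S)

/-- `inSet n S` is `E(S)`: the edges with both endpoints in `S`. -/
def inSet (n : ℕ) (S : Finset (Fin n)) : Finset (Sym2 (Fin n)) :=
  (Edges n).filter (fun e => ∀ v ∈ e, v ∈ S)

/-- Degree of a vertex in an edge set. -/
def deg (n : ℕ) (H : Finset (Sym2 (Fin n))) (v : Fin n) : ℕ :=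
  (H.filter (fun e => v ∈ e)).card

/-- Degree of a vertex in an edge multiset (counting multiplicity). -/
def mdeg (n : ℕ) (L : Multiset (Sym2 (Fin n))) (v : Fin n) : ℕ :=
  (L.filter (fun e => v ∈ e)).card

/-- Feasibility for the path-variant Held–Karp relaxation with endpoints `s, t`. -/
def HKPathFeasible (n : ℕ) (s t : Fin n) (x : Sym2 (Fin n) → ℝ) : Prop :=
  (∀ e, 0 ≤ x e) ∧
  (∑ e ∈ cutSet n {s}, x e = 1) ∧
  (∑ e ∈ cutSet n {t}, x e = 1) ∧
  (∀ v : Fin n, v ≠ s → v ≠ t → ∑ e ∈ cutSet n {v}, x e = 2) ∧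
  (∀ S : Finset (Fin n), S.Nonempty → S ≠ Finset.univ →
      ((s ∈ S ∧ t ∉ S) ∨ (s ∉ S ∧ t ∈ S)) → 1 ≤ ∑ e ∈ cutSet n S, x e) ∧
  (∀ S : Finset (Fin n), S.Nonempty → S ≠ Finset.univ →
      ¬((s ∈ S ∧ t ∉ S) ∨ (s ∉ S ∧ t ∈ S)) → 2 ≤ ∑ e ∈ cutSet n S, x e)

/-- `c` is a metric: nonnegative, symmetric, vanishing on the diagonal, triangle inequality. -/
def IsMetric (n : ℕ) (c : Fin n → Fin n → ℝ) : Prop :=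
  (∀ u v, 0 ≤ c u v) ∧ (∀ u v, c u v = c v u) ∧ (∀ u, c u u = 0) ∧
  (∀ u v w, c u w ≤ c u v + c v w)

/-- Cost of an unordered edge (defined by symmetrization, which agrees with `c u v`
whenever `c` is symmetric). -/
def ecost (n : ℕ) (c : Fin n → Fin n → ℝ) (e : Sym2 (Fin n)) : ℝ :=
  Sym2.lift ⟨fun u v => (c u v + c v u) / 2, by intro u v; ring⟩ e

/-- `c(x) = ∑_{e ∈ E} x_e c(e)`. -/
def xcost (n : ℕ) (c : Fin n → Fin n → ℝ) (x : Sym2 (Fin n) → ℝ) : ℝ :=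
  ∑ e ∈ Edges n, x e * ecost n c e

/-- `c(F) = ∑_{e ∈ F} c(e)` for an edge set `F`. -/
def fcost (n : ℕ) (c : Fin n → Fin n → ℝ) (F : Finset (Sym2 (Fin n))) : ℝ :=
  ∑ e ∈ F, ecost n c e

/-- `H` is (the edge set of) a spanning tree of the complete graph on `Fin n`. -/
def IsSpanningTree (n : ℕ) (H : Finset (Sym2 (Fin n))) : Prop :=
  H ⊆ Edges n ∧ (SimpleGraph.fromEdgeSet (H : Set (Sym2 (Fin n)))).Connected ∧
    H.card = n - 1

/-- The wrong-parity set of an edge set `H`: internal vertices of odd degree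
together with the endpoints of even degree. -/
def wrongParity (n : ℕ) (s t : Fin n) (H : Finset (Sym2 (Fin n))) : Finset (Fin n) :=
  Finset.univ.filter (fun v =>
    if v = s ∨ v = t then Even (deg n H v) else Odd (deg n H v))

/-- `M` is a perfect matching on the vertex set `T`: vertex-disjoint edges covering
exactly the vertices of `T`. -/
def IsPerfectMatchingOn (n : ℕ) (T : Finset (Fin n)) (M : Finset (Sym2 (Fin n))) : Prop :=
  M ⊆ Edges n ∧ (∀ v ∈ T, deg n M v = 1) ∧ (∀ v : Fin n, v ∉ T → deg n M v = 0)

/-- `J` is a `T`-join: exactly the vertices of `T` have odd degree in `J`. -/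
def IsTJoin (n : ℕ) (T : Finset (Fin n)) (J : Finset (Sym2 (Fin n))) : Prop :=
  J ⊆ Edges n ∧ ∀ v : Fin n, Odd (deg n J v) ↔ v ∈ T

/-- There is a Hamiltonian path from `s` to `t` in the complete graph on `Fin n`
of cost (w.r.t. the metric `c`) at most `B`. -/
def ExistsHamPath (n : ℕ) (s t : Fin n) (c : Fin n → Fin n → ℝ) (B : ℝ) : Prop :=
  ∃ p : (⊤ : SimpleGraph (Fin n)).Walk s t,
    p.IsHamiltonian ∧ (p.edges.map (ecost n c)).sum ≤ B

/-- Connectivity of the multigraph `(V, L)` (equivalently, of its support graph,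
which must span all of `Fin n`). -/
def MConnected (n : ℕ) (L : Multiset (Sym2 (Fin n))) : Prop :=
  (SimpleGraph.fromEdgeSet {e | e ∈ L}).Connected

/-- The multiset of edges traversed by the walk given by a vertex list `w`. -/
def walkEdges (n : ℕ) (w : List (Fin n)) : Multiset (Sym2 (Fin n)) :=
  ((w.zip w.tail).map (Function.uncurry Sym2.mk) : List (Sym2 (Fin n)))

/-- `w` is an Eulerian trail from `s` to `t` of the edge multiset `L`: a walk from `s`
to `t` whose multiset of traversed edges is exactly `L` (with multiplicity). -/
def IsEulerianTrail (n : ℕ) (L : Multiset (Sym2 (Fin n))) (s t : Fin n)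
    (w : List (Fin n)) : Prop :=
  w.head? = some s ∧ w.getLast? = some t ∧ walkEdges n w = L

section ST
variable {n : ℕ}

/-- Reachability in the graph with edge set `K`. -/
def Rch (n : ℕ) (K : Finset (Sym2 (Fin n))) (a b : Fin n) : Prop :=
  (SimpleGraph.fromEdgeSet (K : Set (Sym2 (Fin n)))).Reachable a b

lemma Rch.refl (K : Finset (Sym2 (Fin n))) (a : Fin n) : Rch n K a a :=
  SimpleGraph.Reachable.refl a

lemma Rch.symm {K : Finset (Sym2 (Fin n))} {a b : Fin n} (h : Rch n K a b) : Rch n K b a :=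
  SimpleGraph.Reachable.symm h

lemma Rch.trans {K : Finset (Sym2 (Fin n))} {a b c : Fin n} (h : Rch n K a b)
    (h' : Rch n K b c) : Rch n K a c := SimpleGraph.Reachable.trans h h'

lemma Rch.mono {K K' : Finset (Sym2 (Fin n))} (h : K ⊆ K') {a b : Fin n}
    (hr : Rch n K a b) : Rch n K' a b :=
  SimpleGraph.Reachable.mono (SimpleGraph.fromEdgeSet_mono (by exact_mod_cast h)) hr

lemma Rch.of_mem {K : Finset (Sym2 (Fin n))} {a b : Fin n} (h : s(a,b) ∈ K) (hab : a ≠ b) :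
    Rch n K a b :=
  SimpleGraph.Adj.reachable ((SimpleGraph.fromEdgeSet_adj _).2 ⟨by exact_mod_cast h, hab⟩)

lemma reach_insert_cases {K : Finset (Sym2 (Fin n))} {u v a b : Fin n}
    (h : Rch n (insert s(u,v) K) a b) :
    Rch n K a b ∨ (Rch n K a u ∧ Rch n K v b) ∨ (Rch n K a v ∧ Rch n K u b) := by
  have h' : Relation.ReflTransGen (SimpleGraph.fromEdgeSet ((insert s(u,v) K : Finset (Sym2 (Fin n))) : Set (Sym2 (Fin n)))).Adj a b :=
    (SimpleGraph.reachable_iff_reflTransGen _ _).1 h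
  clear h
  induction h' with
  | refl => exact Or.inl (Rch.refl _ _)
  | tail hab hadj ih =>
    rename_i b' c
    rw [SimpleGraph.fromEdgeSet_adj _] at hadj
    obtain ⟨hmem, hne⟩ := hadj
    rw [Finset.coe_insert, Set.mem_insert_iff] at hmem
    rcases hmem with he | hK
    · rw [Sym2.eq_iff] at he
      rcases he with ⟨rfl, rfl⟩ | ⟨rfl, rfl⟩
      · rcases ih with h1 | ⟨h2, _⟩ | ⟨h2, _⟩
        · exact Or.inr (Or.inl ⟨h1, Rch.refl _ _⟩)
        · exact Or.inr (Or.inl ⟨h2, Rch.refl _ _⟩)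
        · exact Or.inl h2
      · rcases ih with h1 | ⟨h2, _⟩ | ⟨h2, _⟩
        · exact Or.inr (Or.inr ⟨h1, Rch.refl _ _⟩)
        · exact Or.inl h2
        · exact Or.inr (Or.inr ⟨h2, Rch.refl _ _⟩)
    · have hbc : Rch n K b' c := Rch.of_mem (by exact_mod_cast hK) hne
      rcases ih with h1 | ⟨h2, h3⟩ | ⟨h2, h3⟩
      · exact Or.inl (h1.trans hbc)
      · exact Or.inr (Or.inl ⟨h2, h3.trans hbc⟩)
      · exact Or.inr (Or.inr ⟨h2, h3.trans hbc⟩)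

lemma reach_insert_of_reach {K : Finset (Sym2 (Fin n))} {u v : Fin n} (huv : Rch n K u v)
    {a b : Fin n} : Rch n (insert s(u,v) K) a b ↔ Rch n K a b := by
  constructor
  · intro h
    rcases reach_insert_cases h with h1 | ⟨h2, h3⟩ | ⟨h2, h3⟩
    · exact h1
    · exact (h2.trans huv).trans h3
    · exact (h2.trans huv.symm).trans h3
  · exact Rch.mono (Finset.subset_insert _ _)

def compF (n : ℕ) (K : Finset (Sym2 (Fin n))) (v : Fin n) : Finset (Fin n) :=
  Finset.univ.filter (fun w => Rch n K v w)

lemma mem_compF {K : Finset (Sym2 (Fin n))} {v w : Fin n} :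
    w ∈ compF n K v ↔ Rch n K v w := by simp [compF]

lemma compF_nonempty (K : Finset (Sym2 (Fin n))) (v : Fin n) : (compF n K v).Nonempty :=
  ⟨v, mem_compF.2 (Rch.refl _ _)⟩

/-- The minimum vertex of the component of `v`. -/
def mrep (n : ℕ) (K : Finset (Sym2 (Fin n))) (v : Fin n) : Fin n :=
  (compF n K v).min' (compF_nonempty K v)

/-- The set of component representatives (minimum vertex of each component). -/
def reps (n : ℕ) (K : Finset (Sym2 (Fin n))) : Finset (Fin n) :=
  Finset.univ.filter (fun v => ∀ w, Rch n K v w → v ≤ w)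

/-- Number of connected components of `(V, K)`. -/
def ncomp (n : ℕ) (K : Finset (Sym2 (Fin n))) : ℕ := (reps n K).card

lemma rch_mrep (K : Finset (Sym2 (Fin n))) (v : Fin n) : Rch n K v (mrep n K v) :=
  mem_compF.1 ((compF n K v).min'_mem _)

lemma mrep_le {K : Finset (Sym2 (Fin n))} {v w : Fin n} (h : Rch n K v w) :
    mrep n K v ≤ w := Finset.min'_le _ _ (mem_compF.2 h)

lemma le_of_mem_reps {K : Finset (Sym2 (Fin n))} {r w : Fin n} (h : r ∈ reps n K)
    (hw : Rch n K r w) : r ≤ w := by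
  rw [reps, Finset.mem_filter] at h
  exact h.2 w hw

lemma mem_reps_iff {K : Finset (Sym2 (Fin n))} {r : Fin n} :
    r ∈ reps n K ↔ ∀ w, Rch n K r w → r ≤ w := by simp [reps]

lemma mrep_mem_reps (K : Finset (Sym2 (Fin n))) (v : Fin n) : mrep n K v ∈ reps n K := by
  rw [mem_reps_iff]
  intro w hw
  exact mrep_le ((rch_mrep K v).trans hw)

lemma mrep_eq_self_of_mem {K : Finset (Sym2 (Fin n))} {v : Fin n} (h : v ∈ reps n K) :
    mrep n K v = v :=
  le_antisymm (mrep_le (Rch.refl _ _)) (le_of_mem_reps h (rch_mrep K v))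

lemma mrep_eq_of_rch {K : Finset (Sym2 (Fin n))} {u v : Fin n} (h : Rch n K u v) :
    mrep n K u = mrep n K v :=
  le_antisymm (mrep_le (h.trans (rch_mrep K v))) (mrep_le (h.symm.trans (rch_mrep K u)))

lemma rch_of_mrep_eq {K : Finset (Sym2 (Fin n))} {u v : Fin n} (h : mrep n K u = mrep n K v) :
    Rch n K u v := by
  have h2 : Rch n K v (mrep n K u) := by rw [h]; exact rch_mrep K v
  exact (rch_mrep K u).trans h2.symm

lemma reps_insert_aux {K : Finset (Sym2 (Fin n))} {u v : Fin n} (h : ¬ Rch n K u v)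
    (hlt : mrep n K u < mrep n K v) :
    reps n (insert s(u,v) K) = (reps n K).erase (mrep n K v) := by
  have huv_ne : u ≠ v := fun he => h (he ▸ Rch.refl K u)
  ext r
  rw [Finset.mem_erase, mem_reps_iff, mem_reps_iff]
  constructor
  · intro hr
    have hrK : ∀ w, Rch n K r w → r ≤ w := fun w hw => hr w (hw.mono (Finset.subset_insert _ _))
    refine ⟨?_, hrK⟩
    rintro rfl
    have a1 : Rch n (insert s(u,v) K) (mrep n K v) v :=
      ((rch_mrep K v).symm).mono (Finset.subset_insert _ _)
    have a2 : Rch n (insert s(u,v) K) v u :=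
      (Rch.of_mem (Finset.mem_insert_self _ _) huv_ne).symm
    have a3 : Rch n (insert s(u,v) K) u (mrep n K u) :=
      (rch_mrep K u).mono (Finset.subset_insert _ _)
    have : mrep n K v ≤ mrep n K u := hr _ ((a1.trans a2).trans a3)
    exact absurd this (not_le.2 hlt)
  · rintro ⟨hne, hrK⟩ w hw
    have hr_mem : r ∈ reps n K := mem_reps_iff.2 hrK
    rcases reach_insert_cases hw with h1 | ⟨h2, h3⟩ | ⟨h2, h3⟩
    · exact hrK w h1
    · have hr_eq : r = mrep n K u :=
        (mrep_eq_self_of_mem hr_mem).symm.trans (mrep_eq_of_rch h2)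
      have hvw : mrep n K v ≤ w := le_of_mem_reps (mrep_mem_reps K v) ((rch_mrep K v).symm.trans h3)
      calc r = mrep n K u := hr_eq
        _ ≤ w := le_of_lt (lt_of_lt_of_le hlt hvw)
    · have : r = mrep n K v := (mrep_eq_self_of_mem hr_mem).symm.trans (mrep_eq_of_rch h2)
      exact absurd this hne

lemma ncomp_insert_of_not_rch {K : Finset (Sym2 (Fin n))} {u v : Fin n} (h : ¬ Rch n K u v) :
    ncomp n (insert s(u,v) K) + 1 = ncomp n K := by
  have hne : mrep n K u ≠ mrep n K v := fun he => h (rch_of_mrep_eq he)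
  rcases hne.lt_or_gt with hlt | hlt
  · rw [ncomp, ncomp, reps_insert_aux h hlt]
    exact Finset.card_erase_add_one (mrep_mem_reps K v)
  · have hswap : (s(u,v) : Sym2 (Fin n)) = s(v,u) := Sym2.eq_swap
    rw [ncomp, ncomp, hswap, reps_insert_aux (fun h' => h (Rch.symm h')) hlt]
    exact Finset.card_erase_add_one (mrep_mem_reps K u)

lemma reps_congr {K K' : Finset (Sym2 (Fin n))} (h : ∀ a b, Rch n K a b ↔ Rch n K' a b) :
    reps n K = reps n K' := by
  ext r
  rw [mem_reps_iff, mem_reps_iff]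
  constructor <;> intro hr w hw
  · exact hr w ((h r w).2 hw)
  · exact hr w ((h r w).1 hw)

lemma rch_empty {a b : Fin n} : Rch n (∅ : Finset (Sym2 (Fin n))) a b ↔ a = b := by
  unfold Rch
  rw [Finset.coe_empty, SimpleGraph.fromEdgeSet_empty]
  exact SimpleGraph.reachable_bot

lemma ncomp_empty : ncomp n (∅ : Finset (Sym2 (Fin n))) = n := by
  have : reps n (∅ : Finset (Sym2 (Fin n))) = Finset.univ := by
    ext r
    rw [mem_reps_iff]
    simp only [Finset.mem_univ, iff_true]
    intro w hw
    rw [rch_empty] at hw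
    exact le_of_eq (congrArg id hw)
  rw [ncomp, this, Finset.card_univ, Fintype.card_fin]

lemma ncomp_eq_one {K : Finset (Sym2 (Fin n))} (hn : 0 < n) (h : ∀ a b, Rch n K a b) :
    ncomp n K = 1 := by
  rw [ncomp, Finset.card_eq_one]
  refine ⟨mrep n K ⟨0, hn⟩, ?_⟩
  ext r
  rw [Finset.mem_singleton]
  constructor
  · intro hr
    exact le_antisymm (le_of_mem_reps hr (h _ _)) (le_of_mem_reps (mrep_mem_reps _ _) (h _ _))
  · rintro rfl
    exact mrep_mem_reps _ _

/-- Both endpoints of `e` lie in the same component of `(V, K)`. -/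
def sameComp (n : ℕ) (K : Finset (Sym2 (Fin n))) (e : Sym2 (Fin n)) : Prop :=
  ∃ a b : Fin n, e = s(a,b) ∧ Rch n K a b

lemma sameComp_mk {K : Finset (Sym2 (Fin n))} {a b : Fin n} :
    sameComp n K s(a,b) ↔ Rch n K a b := by
  constructor
  · rintro ⟨u, w, he, hr⟩
    rw [Sym2.eq_iff] at he
    rcases he with ⟨rfl, rfl⟩ | ⟨rfl, rfl⟩
    · exact hr
    · exact hr.symm
  · intro h; exact ⟨a, b, rfl, h⟩

/-- One step of Kruskal: keep the edge iff it joins two distinct components. -/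
def kstep (n : ℕ) (K : Finset (Sym2 (Fin n))) (e : Sym2 (Fin n)) : Finset (Sym2 (Fin n)) :=
  if sameComp n K e then K else insert e K

/-- Kruskal's fold over a list of edges. -/
def kaux (n : ℕ) : Finset (Sym2 (Fin n)) → List (Sym2 (Fin n)) → Finset (Sym2 (Fin n))
  | K, [] => K
  | K, e :: l => kaux n (kstep n K e) l

lemma subset_kstep (K : Finset (Sym2 (Fin n))) (e : Sym2 (Fin n)) : K ⊆ kstep n K e := by
  rw [kstep]; split_ifs
  · exact Finset.Subset.refl K
  · exact Finset.subset_insert _ _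

lemma kstep_subset (K : Finset (Sym2 (Fin n))) (e : Sym2 (Fin n)) :
    kstep n K e ⊆ insert e K := by
  rw [kstep]; split_ifs
  · exact Finset.subset_insert _ _
  · exact Finset.Subset.refl _

lemma subset_kaux (K : Finset (Sym2 (Fin n))) (l : List (Sym2 (Fin n))) : K ⊆ kaux n K l := by
  induction l generalizing K with
  | nil => exact Finset.Subset.refl K
  | cons e l ih => exact (subset_kstep K e).trans (ih (kstep n K e))

lemma kaux_subset (K : Finset (Sym2 (Fin n))) (l : List (Sym2 (Fin n))) :
    kaux n K l ⊆ K ∪ l.toFinset := by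
  induction l generalizing K with
  | nil => simp [kaux]
  | cons e l ih =>
    refine (ih (kstep n K e)).trans ?_
    intro x hx
    rcases Finset.mem_union.1 hx with hx | hx
    · rcases Finset.mem_insert.1 (kstep_subset K e hx) with h | h
      · subst h; simp
      · simp [h]
    · simp [Finset.mem_union, List.mem_toFinset.1 hx]

lemma kaux_reach (K : Finset (Sym2 (Fin n))) (l : List (Sym2 (Fin n))) (a b : Fin n) :
    Rch n (kaux n K l) a b ↔ Rch n (K ∪ l.toFinset) a b := by
  induction l generalizing K with
  | nil => simp [kaux]
  | cons e l ih =>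
    rw [show kaux n K (e :: l) = kaux n (kstep n K e) l from rfl, ih]
    have hun : K ∪ (e :: l).toFinset = insert e (K ∪ l.toFinset) := by
      rw [List.toFinset_cons, Finset.union_insert]
    rw [hun, kstep]
    split_ifs with hs
    · obtain ⟨a₀, b₀, rfl, hr⟩ := hs
      exact (reach_insert_of_reach (hr.mono Finset.subset_union_left)).symm
    · rw [Finset.insert_union]

lemma kaux_card (K : Finset (Sym2 (Fin n))) (l : List (Sym2 (Fin n))) :
    (kaux n K l).card + ncomp n (kaux n K l) = K.card + ncomp n K := by
  induction l generalizing K with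
  | nil => rfl
  | cons e l ih =>
    rw [show kaux n K (e :: l) = kaux n (kstep n K e) l from rfl, ih, kstep]
    split_ifs with hs
    · rfl
    · induction e using Sym2.ind with
    | _ a b =>
      have hr : ¬ Rch n K a b := fun h => hs (sameComp_mk.2 h)
      have hab : a ≠ b := fun h => hr (h ▸ Rch.refl K a)
      have hnm : s(a,b) ∉ K := fun h => hr (Rch.of_mem h hab)
      rw [Finset.card_insert_of_notMem hnm]
      have := ncomp_insert_of_not_rch hr
      omega

lemma kaux_append (K : Finset (Sym2 (Fin n))) (l₁ l₂ : List (Sym2 (Fin n))) :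
    kaux n K (l₁ ++ l₂) = kaux n (kaux n K l₁) l₂ := by
  induction l₁ generalizing K with
  | nil => rfl
  | cons e l ih => exact ih (kstep n K e)


section HK
variable {s t : Fin n} {x : Sym2 (Fin n) → ℝ}

lemma mem_Edges {e : Sym2 (Fin n)} : e ∈ Edges n ↔ ¬ e.IsDiag := by simp [Edges]

lemma mem_Edges_mk {a b : Fin n} : s(a,b) ∈ Edges n ↔ a ≠ b := by
  simp [Edges]

lemma cutSet_singleton_eq (v : Fin n) :
    cutSet n {v} = (Edges n).filter (fun e => v ∈ e) := by
  ext e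
  induction e using Sym2.ind with
  | _ a b =>
    simp only [cutSet, Finset.mem_filter, Finset.mem_singleton]
    constructor
    · rintro ⟨hd, u, w, he, rfl, hw⟩
      exact ⟨hd, by rw [he]; exact Sym2.mem_mk_left _ _⟩
    · rintro ⟨hd, hv⟩
      have hab : a ≠ b := mem_Edges_mk.1 hd
      rcases Sym2.mem_iff.1 hv with rfl | rfl
      · exact ⟨hd, v, b, rfl, rfl, hab.symm⟩
      · exact ⟨hd, v, a, Sym2.eq_swap, rfl, hab⟩

lemma card_filter_or {S : Finset (Fin n)} {a b : Fin n} (hab : a ≠ b) :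
    (S.filter (fun v => v = a ∨ v = b)).card
      = (if a ∈ S then 1 else 0) + (if b ∈ S then 1 else 0) := by
  rw [Finset.filter_or, Finset.filter_eq', Finset.filter_eq']
  split_ifs with h1 h2 h2
  · rw [Finset.card_union_of_disjoint (by simp [hab.symm, hab])]; simp
  · simp
  · simp
  · simp

lemma card_endpoints {S : Finset (Fin n)} {a b : Fin n} (hab : a ≠ b) :
    (S.filter (fun v => v ∈ s(a,b))).card
      = (if a ∈ S then 1 else 0) + (if b ∈ S then 1 else 0) := by
  have h : S.filter (fun v => v ∈ s(a,b)) = S.filter (fun v => v = a ∨ v = b) := by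
    apply Finset.filter_congr; intro v _; simp [Sym2.mem_iff]
  rw [h, card_filter_or hab]

/-- Double counting: `∑_{v∈S} x(δ(v)) = 2 x(E(S)) + x(δ(S))`. -/
lemma degsum (x : Sym2 (Fin n) → ℝ) (S : Finset (Fin n)) :
    ∑ v ∈ S, (∑ e ∈ cutSet n {v}, x e)
      = 2 * (∑ e ∈ inSet n S, x e) + ∑ e ∈ cutSet n S, x e := by
  have h1 : ∀ v ∈ S, ∑ e ∈ cutSet n {v}, x e
      = ∑ e ∈ Edges n, if v ∈ e then x e else 0 := by
    intro v _; rw [cutSet_singleton_eq, Finset.sum_filter]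
  rw [Finset.sum_congr rfl h1, Finset.sum_comm]
  have h2 : ∀ e ∈ Edges n, (∑ v ∈ S, if v ∈ e then x e else 0)
      = ((S.filter (fun v => v ∈ e)).card : ℝ) * x e := by
    intro e _
    rw [← Finset.sum_filter, Finset.sum_const, nsmul_eq_mul]
  rw [Finset.sum_congr rfl h2]
  set f : Sym2 (Fin n) → ℝ := fun e => ((S.filter (fun v => v ∈ e)).card : ℝ) * x e with hf
  have hsplit1 : ∑ e ∈ Edges n, f e
      = ∑ e ∈ inSet n S, f e + ∑ e ∈ (Edges n).filter (fun e => ¬ ∀ v ∈ e, v ∈ S), f e := by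
    rw [inSet, Finset.sum_filter_add_sum_filter_not]
  have hsplit2 : ∑ e ∈ (Edges n).filter (fun e => ¬ ∀ v ∈ e, v ∈ S), f e
      = ∑ e ∈ cutSet n S, f e := by
    refine (Finset.sum_subset ?_ ?_).symm
    · intro e he
      simp only [cutSet, Finset.mem_filter] at he
      simp only [Finset.mem_filter]
      obtain ⟨hE, u, w, rfl, hu, hw⟩ := he
      refine ⟨hE, ?_⟩
      push_neg
      exact ⟨w, Sym2.mem_mk_right _ _, hw⟩
    · intro e he hne
      simp only [Finset.mem_filter] at he
      simp only [cutSet, Finset.mem_filter] at hne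
      obtain ⟨hE, hnotall⟩ := he
      induction e using Sym2.ind with
    | _ a b =>
      have hab : a ≠ b := mem_Edges_mk.1 hE
      push_neg at hnotall
      obtain ⟨w, hwmem, hwS⟩ := hnotall
      have hnq : ¬ ∃ u v : Fin n, s(a,b) = s(u,v) ∧ u ∈ S ∧ v ∉ S := fun hq => hne ⟨hE, hq⟩
      have haS : a ∉ S := by
        intro haS
        have hbS : b ∉ S := by
          rcases Sym2.mem_iff.1 hwmem with rfl | rfl
          · exact absurd haS hwS
          · exact hwS
        exact hnq ⟨a, b, rfl, haS, hbS⟩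
      have hbS : b ∉ S := by
        intro hbS
        exact hnq ⟨b, a, Sym2.eq_swap, hbS, haS⟩
      rw [hf]
      simp only []
      rw [card_endpoints hab, if_neg haS, if_neg hbS]
      norm_num
  rw [hsplit1, hsplit2]
  have hin : ∑ e ∈ inSet n S, f e = ∑ e ∈ inSet n S, 2 * x e := by
    apply Finset.sum_congr rfl
    intro e he
    rw [inSet, Finset.mem_filter] at he
    obtain ⟨hE, hall⟩ := he
    induction e using Sym2.ind with
    | _ a b =>
      have hab : a ≠ b := mem_Edges_mk.1 hE
      have haS : a ∈ S := hall a (Sym2.mem_mk_left _ _)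
      have hbS : b ∈ S := hall b (Sym2.mem_mk_right _ _)
      rw [hf]
      simp only []
      rw [card_endpoints hab, if_pos haS, if_pos hbS]
      norm_num
  have hcut : ∑ e ∈ cutSet n S, f e = ∑ e ∈ cutSet n S, x e := by
    apply Finset.sum_congr rfl
    intro e he
    rw [cutSet, Finset.mem_filter] at he
    obtain ⟨hE, u, w, rfl, hu, hw⟩ := he
    have huw : u ≠ w := mem_Edges_mk.1 hE
    rw [hf]
    simp only []
    rw [card_endpoints huw, if_pos hu, if_neg hw]
    norm_num
  rw [hin, hcut, Finset.mul_sum]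

lemma cutSet_univ : cutSet n (Finset.univ : Finset (Fin n)) = ∅ := by
  rw [cutSet, Finset.filter_false_of_mem]
  · rintro e _ ⟨u, v, _, _, hv⟩
    exact hv (Finset.mem_univ v)

lemma inSet_univ : inSet n (Finset.univ : Finset (Fin n)) = Edges n := by
  rw [inSet, Finset.filter_true_of_mem]
  intro e _ v _
  exact Finset.mem_univ v

section feas
variable {s t : Fin n} {x : Sym2 (Fin n) → ℝ}

lemma degval (hst : s ≠ t) (hx : HKPathFeasible n s t x) (v : Fin n) :
    ∑ e ∈ cutSet n {v}, x e = if v = s ∨ v = t then 1 else 2 := by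
  split_ifs with h
  · rcases h with rfl | rfl
    · exact hx.2.1
    · exact hx.2.2.1
  · push_neg at h
    exact hx.2.2.2.1 v h.1 h.2

lemma sumdeg (hst : s ≠ t) (hx : HKPathFeasible n s t x) (S : Finset (Fin n)) :
    ∑ v ∈ S, (∑ e ∈ cutSet n {v}, x e)
      = 2 * (S.card : ℝ) - (if s ∈ S then 1 else 0) - (if t ∈ S then 1 else 0) := by
  have h1 : ∀ v ∈ S, ∑ e ∈ cutSet n {v}, x e
      = 2 - (if v = s ∨ v = t then (1:ℝ) else 0) := by
    intro v _
    rw [degval hst hx v]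
    split_ifs <;> norm_num
  rw [Finset.sum_congr rfl h1, Finset.sum_sub_distrib, Finset.sum_const, Finset.sum_boole,
    card_filter_or hst]
  push_cast
  split_ifs <;> push_cast <;> ring

/-- `x(E(S)) ≤ |S| - 1` for every nonempty `S`. -/
lemma inSet_bound (hst : s ≠ t) (hx : HKPathFeasible n s t x) {S : Finset (Fin n)}
    (hS : S.Nonempty) : ∑ e ∈ inSet n S, x e ≤ (S.card : ℝ) - 1 := by
  have hdc := degsum x S
  rw [sumdeg hst hx S] at hdc
  by_cases hU : S = Finset.univ
  · subst hU
    rw [cutSet_univ] at hdc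
    simp only [Finset.mem_univ, if_pos] at hdc
    simp only [Finset.sum_empty] at hdc
    linarith
  · have hkey : (2:ℝ) ≤ (if s ∈ S then (1:ℝ) else 0) + (if t ∈ S then 1 else 0)
        + ∑ e ∈ cutSet n S, x e := by
      by_cases hs' : s ∈ S <;> by_cases ht' : t ∈ S <;>
        simp only [hs', ht', if_true, if_false]
      · have hC : (0:ℝ) ≤ ∑ e ∈ cutSet n S, x e :=
          Finset.sum_nonneg fun e _ => hx.1 e
        linarith
      · have hC := hx.2.2.2.2.1 S hS hU (Or.inl ⟨hs', ht'⟩)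
        linarith
      · have hC := hx.2.2.2.2.1 S hS hU (Or.inr ⟨hs', ht'⟩)
        linarith
      · have hC := hx.2.2.2.2.2 S hS hU (by simp [hs', ht'])
        linarith
    linarith

/-- `x(E) = n - 1`. -/
lemma edges_sum (hn : 2 ≤ n) (hst : s ≠ t) (hx : HKPathFeasible n s t x) :
    ∑ e ∈ Edges n, x e = (n : ℝ) - 1 := by
  have hdc := degsum x (Finset.univ : Finset (Fin n))
  rw [sumdeg hst hx, cutSet_univ, inSet_univ] at hdc
  simp only [Finset.mem_univ, if_pos, Finset.sum_empty, Finset.card_univ, Fintype.card_fin]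
    at hdc
  linarith

end feas

/-- The partition (cut) lower bound: the edges crossing between distinct components of
`(V, K)` carry `x`-weight at least `ncomp K - 1`. -/
lemma partition_bound (hn : 2 ≤ n) (hst : s ≠ t) (hx : HKPathFeasible n s t x)
    (K : Finset (Sym2 (Fin n))) :
    (ncomp n K : ℝ) - 1 ≤ ∑ e ∈ (Edges n).filter (fun e => ¬ sameComp n K e), x e := by
  -- the component of each vertex, as a Finset, indexed by its representative
  set S : Fin n → Finset (Fin n) := fun r => Finset.univ.filter (fun v => mrep n K v = r)
    with hS
  -- the "same component" edges
  set same := (Edges n).filter (fun e => sameComp n K e) with hsame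
  have hsplit : ∑ e ∈ same, x e
      + ∑ e ∈ (Edges n).filter (fun e => ¬ sameComp n K e), x e = ∑ e ∈ Edges n, x e :=
    Finset.sum_filter_add_sum_filter_not _ _ _
  -- the map sending a same-component edge to its component representative
  set g : Sym2 (Fin n) → Fin n :=
    fun e => Sym2.lift ⟨fun a b => min (mrep n K a) (mrep n K b),
      fun a b => min_comm _ _⟩ e with hg
  have hmaps : ∀ e ∈ same, g e ∈ reps n K := by
    intro e he
    rw [hsame, Finset.mem_filter] at he
    obtain ⟨hE, a, b, rfl, hr⟩ := he
    have : mrep n K a = mrep n K b := mrep_eq_of_rch hr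
    rw [hg]
    simp only [Sym2.lift_mk, this, min_self]
    exact mrep_mem_reps K b
  have hfib : ∑ e ∈ same, x e
      = ∑ r ∈ reps n K, ∑ e ∈ same.filter (fun e => g e = r), x e :=
    (Finset.sum_fiberwise_of_maps_to hmaps _).symm
  have hsub : ∀ r ∈ reps n K, same.filter (fun e => g e = r) ⊆ inSet n (S r) := by
    intro r _ e he
    rw [Finset.mem_filter, hsame, Finset.mem_filter] at he
    obtain ⟨⟨hE, a, b, heq, hr⟩, hge⟩ := he
    subst heq
    have hab : mrep n K a = mrep n K b := mrep_eq_of_rch hr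
    rw [hg] at hge
    simp only [Sym2.lift_mk, hab, min_self] at hge
    rw [inSet, Finset.mem_filter]
    refine ⟨hE, ?_⟩
    intro v hv
    rcases Sym2.mem_iff.1 hv with rfl | rfl
    · rw [hS]; simp only [Finset.mem_filter, Finset.mem_univ, true_and]
      rw [hab]; exact hge
    · rw [hS]; simp only [Finset.mem_filter, Finset.mem_univ, true_and]
      exact hge
  have hSne : ∀ r ∈ reps n K, (S r).Nonempty := by
    intro r hr
    refine ⟨r, ?_⟩
    rw [hS]; simp only [Finset.mem_filter, Finset.mem_univ, true_and]
    exact mrep_eq_self_of_mem hr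
  have hbound : ∀ r ∈ reps n K, ∑ e ∈ same.filter (fun e => g e = r), x e
      ≤ ((S r).card : ℝ) - 1 := by
    intro r hr
    refine le_trans ?_ (inSet_bound hst hx (hSne r hr))
    exact Finset.sum_le_sum_of_subset_of_nonneg (hsub r hr) (fun e _ _ => hx.1 e)
  have hcards : ∑ r ∈ reps n K, (S r).card = n := by
    have := Finset.card_eq_sum_card_fiberwise
      (f := fun v => mrep n K v) (s := Finset.univ) (t := reps n K)
      (fun v _ => mrep_mem_reps K v)
    rw [Finset.card_univ, Fintype.card_fin] at this
    rw [← this]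
  have hsame_le : ∑ e ∈ same, x e ≤ (n : ℝ) - (ncomp n K : ℝ) := by
    rw [hfib]
    calc ∑ r ∈ reps n K, ∑ e ∈ same.filter (fun e => g e = r), x e
        ≤ ∑ r ∈ reps n K, (((S r).card : ℝ) - 1) := Finset.sum_le_sum hbound
      _ = (n : ℝ) - (ncomp n K : ℝ) := by
          rw [Finset.sum_sub_distrib, Finset.sum_const, nsmul_eq_mul, mul_one]
          have : ∑ r ∈ reps n K, ((S r).card : ℝ) = (n : ℝ) := by
            rw [← Nat.cast_sum, hcards]
          rw [this, ncomp]
  have hE := edges_sum hn hst hx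
  linarith

/-- Abel-summation comparison: if a set `F` of edges satisfies the "suffix" cardinality
bounds with respect to a sorted list `l`, its total cost is at most `∑ x e * c e`. -/
lemma abel_bound (x : Sym2 (Fin n) → ℝ) (hx0 : ∀ e, 0 ≤ x e) :
    ∀ (l : List (Sym2 (Fin n))) (c : Sym2 (Fin n) → ℝ),
      l.Pairwise (fun e f => c e ≤ c f) → l.Nodup → (∀ e ∈ l, 0 ≤ c e) →
      ∀ F : Finset (Sym2 (Fin n)), F ⊆ l.toFinset →
      (∀ j : ℕ, ((F ∩ (l.drop j).toFinset).card : ℝ) ≤ ∑ e ∈ (l.drop j).toFinset, x e) →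
      ∑ e ∈ F, c e ≤ ∑ e ∈ l.toFinset, x e * c e := by
  intro l
  induction l with
  | nil =>
    intro c _ _ _ F hF _
    rw [List.toFinset_nil, Finset.subset_empty] at hF
    subst hF
    simp
  | cons e₀ l ih =>
    intro c hsort hnd hc F hF hcond
    have he₀l : e₀ ∉ l := (List.nodup_cons.1 hnd).1
    have hndl : l.Nodup := (List.nodup_cons.1 hnd).2
    have hsl : l.Pairwise (fun e f => c e ≤ c f) := (List.pairwise_cons.1 hsort).2
    have hhead : ∀ e ∈ l, c e₀ ≤ c e := (List.pairwise_cons.1 hsort).1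
    set c' : Sym2 (Fin n) → ℝ := fun e => c e - c e₀ with hc'
    have he₀lf : e₀ ∉ l.toFinset := fun h => he₀l (List.mem_toFinset.1 h)
    have hc'e₀ : c' e₀ = 0 := by simp only [hc']; ring
    -- decompose the left-hand side
    have key1 : ∑ e ∈ F, c e = ∑ e ∈ F, c' e + (F.card : ℝ) * c e₀ := by
      have h := Finset.sum_congr rfl (fun e (_ : e ∈ F) => show c e = c' e + c e₀ by
        simp only [hc']; ring)
      rw [h, Finset.sum_add_distrib, Finset.sum_const, nsmul_eq_mul]
    -- decompose the right-hand side
    have key2 : ∑ e ∈ (e₀ :: l).toFinset, x e * c e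
        = ∑ e ∈ l.toFinset, x e * c' e + (∑ e ∈ (e₀ :: l).toFinset, x e) * c e₀ := by
      rw [List.toFinset_cons, Finset.sum_insert he₀lf, Finset.sum_insert he₀lf]
      have h := Finset.sum_congr rfl (fun e (_ : e ∈ l.toFinset) =>
        show x e * c e = x e * c' e + x e * c e₀ by simp only [hc']; ring)
      rw [h, Finset.sum_add_distrib, ← Finset.sum_mul]
      have : x e₀ * c e₀ = x e₀ * c' e₀ + x e₀ * c e₀ := by rw [hc'e₀]; ring
      rw [this]
      ring
    -- apply the induction hypothesis to `F' = F ∩ l.toFinset` and `c'`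
    set F' := F ∩ l.toFinset with hF'
    have hF'sub : F' ⊆ l.toFinset := Finset.inter_subset_right
    have hc'nonneg : ∀ e ∈ l, 0 ≤ c' e := fun e he => by
      simp only [hc']; linarith [hhead e he]
    have hsort' : l.Pairwise (fun e f => c' e ≤ c' f) := by
      refine hsl.imp ?_
      intro e f hef
      simp only [hc']
      linarith
    have hcond' : ∀ j : ℕ, ((F' ∩ (l.drop j).toFinset).card : ℝ)
        ≤ ∑ e ∈ (l.drop j).toFinset, x e := by
      intro j
      have hdropsub : (l.drop j).toFinset ⊆ l.toFinset := by
        intro e he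
        exact List.mem_toFinset.2 (List.drop_subset j l (List.mem_toFinset.1 he))
      have heq : F' ∩ (l.drop j).toFinset = F ∩ ((e₀ :: l).drop (j+1)).toFinset := by
        rw [hF', Finset.inter_assoc, Finset.inter_eq_right.2 hdropsub]
        rfl
      have := hcond (j+1)
      rw [← heq] at this
      exact this
    have hIH := ih c' hsort' hndl hc'nonneg F' hF'sub hcond'
    -- the `j = 0` condition bounds `|F|`
    have hFcard : (F.card : ℝ) ≤ ∑ e ∈ (e₀ :: l).toFinset, x e := by
      have h0 := hcond 0
      rw [List.drop_zero, Finset.inter_eq_left.2 hF] at h0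
      exact h0
    -- sums of `c'` over `F` and `F'` coincide
    have hFF' : ∑ e ∈ F', c' e = ∑ e ∈ F, c' e := by
      apply Finset.sum_subset Finset.inter_subset_left
      intro e heF heF'
      have : e = e₀ := by
        rcases Finset.mem_insert.1 (by rw [← List.toFinset_cons]; exact hF heF :
            e ∈ insert e₀ l.toFinset) with h | h
        · exact h
        · exact absurd (Finset.mem_inter.2 ⟨heF, h⟩) heF'
      rw [this, hc'e₀]
    have hce₀ : 0 ≤ c e₀ := hc e₀ List.mem_cons_self
    have hmul : (F.card : ℝ) * c e₀ ≤ (∑ e ∈ (e₀ :: l).toFinset, x e) * c e₀ :=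
      mul_le_mul_of_nonneg_right hFcard hce₀
    rw [key1, key2, ← hFF']
    linarith

end HK
end ST

/-- (Spanning tree bound.) For any nonnegative edge cost `c` and any
feasible Held–Karp solution `x`, there is a spanning tree `H` of the complete graph with
`c(H) ≤ c(x)`; in particular the minimum spanning tree costs at most `c(x)`. -/
theorem spanning_tree_bound (n : ℕ) (hn : 2 ≤ n) (s t : Fin n) (hst : s ≠ t)
    (c : Sym2 (Fin n) → ℝ) (hc : ∀ e, 0 ≤ c e)
    (x : Sym2 (Fin n) → ℝ) (hx : HKPathFeasible n s t x) :
    ∃ H : Finset (Sym2 (Fin n)), IsSpanningTree n H ∧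
      ∑ e ∈ H, c e ≤ ∑ e ∈ Edges n, x e * c e := by
  classical
  letI : IsTotal (Sym2 (Fin n)) (fun e f => c e ≤ c f) := ⟨fun a b => le_total _ _⟩
  letI : IsTrans (Sym2 (Fin n)) (fun e f => c e ≤ c f) := ⟨fun a b d h1 h2 => le_trans h1 h2⟩
  set l := List.insertionSort (fun e f => c e ≤ c f) (Edges n).toList with hl
  have hperm : l.Perm (Edges n).toList := List.perm_insertionSort _ _
  have hsort : l.Pairwise (fun e f => c e ≤ c f) := List.pairwise_insertionSort _ _
  have hnodup : l.Nodup := hperm.nodup_iff.2 ((Edges n).nodup_toList)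
  have hset : l.toFinset = Edges n := by
    rw [List.toFinset_eq_of_perm _ _ hperm, Finset.toList_toFinset]
  set T := kaux n ∅ l with hT
  have hTsub : T ⊆ Edges n := by
    have h := kaux_subset (∅ : Finset (Sym2 (Fin n))) l
    rwa [Finset.empty_union, hset] at h
  have hfull : ∀ a b : Fin n, Rch n (Edges n) a b := by
    intro a b
    by_cases hab : a = b
    · subst hab; exact Rch.refl _ _
    · exact Rch.of_mem (mem_Edges_mk.2 hab) hab
  have hTreach : ∀ a b, Rch n T a b ↔ Rch n (Edges n) a b := by
    intro a b
    rw [hT, kaux_reach, Finset.empty_union, hset]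
  have h0n : 0 < n := lt_of_lt_of_le two_pos hn
  have hT1 : ncomp n T = 1 := ncomp_eq_one h0n (fun a b => (hTreach a b).2 (hfull a b))
  have hTcard : T.card + 1 = n := by
    have h := kaux_card (∅ : Finset (Sym2 (Fin n))) l
    rw [Finset.card_empty, ncomp_empty, ← hT, hT1] at h
    omega
  refine ⟨T, ⟨hTsub, ?_, ?_⟩, ?_⟩
  · rw [SimpleGraph.connected_iff]
    exact ⟨fun a b => (hTreach a b).2 (hfull a b), ⟨⟨0, h0n⟩⟩⟩
  · omega
  · -- cost bound via Abel summation
    have hcond : ∀ j : ℕ, ((T ∩ (l.drop j).toFinset).card : ℝ)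
        ≤ ∑ e ∈ (l.drop j).toFinset, x e := by
      intro j
      set P := (l.take j).toFinset with hP
      set D := (l.drop j).toFinset with hD
      set A := kaux n ∅ (l.take j) with hA
      have hsplitl : l.take j ++ l.drop j = l := List.take_append_drop j l
      have hPD : P ∪ D = Edges n := by
        rw [hP, hD, ← List.toFinset_append, hsplitl, hset]
      have hdisj : Disjoint P D := List.disjoint_toFinset_iff_disjoint.2
        (List.disjoint_take_drop hnodup (le_refl j))
      have hTA : T = kaux n A (l.drop j) := by rw [hT, hA, ← kaux_append, hsplitl]
      have hAT : A ⊆ T := by rw [hTA]; exact subset_kaux _ _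
      have hAP : A ⊆ P := by
        have h := kaux_subset (∅ : Finset (Sym2 (Fin n))) (l.take j)
        rwa [Finset.empty_union] at h
      have hTAD : T ⊆ A ∪ D := by rw [hTA]; exact kaux_subset _ _
      have hTP : T ∩ P = A := by
        apply Finset.Subset.antisymm
        · intro e he
          rcases Finset.mem_union.1 (hTAD (Finset.mem_inter.1 he).1) with h | h
          · exact h
          · exact absurd (Finset.mem_inter.1 he).2 (Finset.disjoint_right.1 hdisj h)
        · intro e he
          exact Finset.mem_inter.2 ⟨hAT he, hAP he⟩
      have hcardT : T.card = (T ∩ P).card + (T ∩ D).card := by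
        have hcover : (T ∩ P) ∪ (T ∩ D) = T := by
          rw [← Finset.inter_union_distrib_left, hPD, Finset.inter_eq_left.2 hTsub]
        have hd2 : Disjoint (T ∩ P) (T ∩ D) :=
          hdisj.mono Finset.inter_subset_right Finset.inter_subset_right
        have h := Finset.card_union_of_disjoint hd2
        rw [hcover] at h
        omega
      have hAcard : A.card + ncomp n A = n := by
        have h := kaux_card (∅ : Finset (Sym2 (Fin n))) (l.take j)
        rw [Finset.card_empty, ncomp_empty, ← hA] at h
        omega
      have hAnc : ncomp n A = ncomp n P := by
        rw [ncomp, ncomp]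
        congr 1
        apply reps_congr
        intro a b
        rw [hA, kaux_reach, Finset.empty_union, hP]
      have hkey : (T ∩ D).card + 1 = ncomp n P := by
        rw [hTP] at hcardT
        omega
      have hcross := partition_bound hn hst hx P
      have hcsub : (Edges n).filter (fun e => ¬ sameComp n P e) ⊆ D := by
        intro e he
        induction e using Sym2.ind with
        | _ a b =>
          rw [Finset.mem_filter] at he
          obtain ⟨hE, hns⟩ := he
          have heP : s(a,b) ∉ P := fun heP =>
            hns (sameComp_mk.2 (Rch.of_mem heP (mem_Edges_mk.1 hE)))
          rcases Finset.mem_union.1 (hPD ▸ hE : s(a,b) ∈ P ∪ D) with h | h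
          · exact absurd h heP
          · exact h
      have hxD : ∑ e ∈ (Edges n).filter (fun e => ¬ sameComp n P e), x e
          ≤ ∑ e ∈ D, x e :=
        Finset.sum_le_sum_of_subset_of_nonneg hcsub (fun e _ _ => hx.1 e)
      have hcast : ((T ∩ D).card : ℝ) + 1 = (ncomp n P : ℝ) := by
        exact_mod_cast congrArg (Nat.cast : ℕ → ℝ) hkey
      linarith
    have habel := abel_bound x hx.1 l c hsort hnodup (fun e _ => hc e) T
      (by rw [hset]; exact hTsub) hcond
    rwa [hset] at habel


end
end TSPPath
end

section
/- (Cycles of nearly integral edges are long.) Let x be a feasible solution of the path-variant Held-Karp relaxation with respect to s and t, and let γ ∈ (0,1). If C is a cycle in the complete graph on V (a closed walk through k ≥ 3 distinct vertices using k distinct edges) all of whose edges e satisfy x_e ≥ 1 − γ, then the length k of C satisfies k ≥ 1/γ. -/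
open Finset

namespace TSPPath

noncomputable section
open scoped Classical

lemma cutSet_singleton (n : ℕ) (v : Fin n) :
    cutSet n {v} = (Edges n).filter (fun e => v ∈ e) := by
  ext e
  simp only [cutSet, Finset.mem_filter]
  constructor
  · rintro ⟨hE, u, w, rfl, hu, hw⟩
    simp only [Finset.mem_singleton] at hu
    subst hu
    exact ⟨hE, Sym2.mem_mk_left _ _⟩
  · rintro ⟨hE, hv⟩
    refine ⟨hE, ?_⟩
    induction e with
    | _ a b =>
      have hd : a ≠ b := by
        have := (Finset.mem_filter.mp hE).2
        simpa [Sym2.isDiag_iff_proj_eq] using this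
      rw [Sym2.mem_iff] at hv
      rcases hv with rfl | rfl
      · exact ⟨v, b, rfl, by simp, by simp [Ne.symm hd]⟩
      · exact ⟨v, a, Sym2.eq_swap, by simp, by simp [hd]⟩

lemma mem_edges_iff {n : ℕ} {a b : Fin n} : s(a, b) ∈ Edges n ↔ a ≠ b := by
  simp [Edges, Sym2.isDiag_iff_proj_eq]

lemma mem_inSet_iff {n : ℕ} {a b : Fin n} {S : Finset (Fin n)} (hab : a ≠ b) :
    s(a, b) ∈ inSet n S ↔ a ∈ S ∧ b ∈ S := by
  simp only [inSet, Finset.mem_filter]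
  constructor
  · rintro ⟨-, h⟩
    exact ⟨h a (Sym2.mem_mk_left _ _), h b (Sym2.mem_mk_right _ _)⟩
  · rintro ⟨ha, hb⟩
    refine ⟨mem_edges_iff.mpr hab, ?_⟩
    intro v hv
    rw [Sym2.mem_iff] at hv
    rcases hv with rfl | rfl <;> assumption

lemma mem_cutSet_iff {n : ℕ} {a b : Fin n} {S : Finset (Fin n)} (hab : a ≠ b) :
    s(a, b) ∈ cutSet n S ↔ (a ∈ S ∧ b ∉ S) ∨ (b ∈ S ∧ a ∉ S) := by
  simp only [cutSet, Finset.mem_filter]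
  constructor
  · rintro ⟨-, u, w, hew, hu, hw⟩
    rw [Sym2.eq_iff] at hew
    rcases hew with ⟨rfl, rfl⟩ | ⟨rfl, rfl⟩
    · exact Or.inl ⟨hu, hw⟩
    · exact Or.inr ⟨hu, hw⟩
  · rintro (⟨ha, hb⟩ | ⟨hb, ha⟩)
    · exact ⟨mem_edges_iff.mpr hab, a, b, rfl, ha, hb⟩
    · exact ⟨mem_edges_iff.mpr hab, b, a, Sym2.eq_swap, hb, ha⟩

/-- Handshake-type identity: the sum of fractional degrees over `S` equals twice the
mass inside `S` plus the mass on the cut `δ(S)`. -/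
lemma handshake (n : ℕ) (S : Finset (Fin n)) (x : Sym2 (Fin n) → ℝ) :
    ∑ v ∈ S, ∑ e ∈ cutSet n {v}, x e
      = 2 * (∑ e ∈ inSet n S, x e) + ∑ e ∈ cutSet n S, x e := by
  have hrw : ∀ v : Fin n, ∑ e ∈ cutSet n {v}, x e
      = ∑ e ∈ Edges n, if v ∈ e then x e else 0 := by
    intro v; rw [cutSet_singleton, Finset.sum_filter]
  have hpt : ∀ e ∈ Edges n, (∑ v ∈ S, if v ∈ e then x e else 0)
      = (if e ∈ inSet n S then 2 * x e else 0) + (if e ∈ cutSet n S then x e else 0) := by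
    intro e he
    induction e with
    | _ a b =>
      have hab : a ≠ b := mem_edges_iff.mp he
      have hL : (∑ v ∈ S, if v ∈ s(a, b) then x s(a, b) else 0)
          = (if a ∈ S then x s(a, b) else 0) + (if b ∈ S then x s(a, b) else 0) := by
        have : ∀ v ∈ S, (if v ∈ s(a, b) then x s(a, b) else 0)
            = (if v = a then x s(a, b) else 0) + (if v = b then x s(a, b) else 0) := by
          intro v _
          simp only [Sym2.mem_iff]
          by_cases h1 : v = a <;> by_cases h2 : v = b <;> simp_all
        rw [Finset.sum_congr rfl this, Finset.sum_add_distrib,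
          Finset.sum_ite_eq' S a (fun _ => x s(a, b)),
          Finset.sum_ite_eq' S b (fun _ => x s(a, b))]
      rw [hL]
      simp only [mem_inSet_iff hab, mem_cutSet_iff hab]
      by_cases ha : a ∈ S <;> by_cases hb : b ∈ S <;> simp [ha, hb] <;> ring
  calc ∑ v ∈ S, ∑ e ∈ cutSet n {v}, x e
      = ∑ e ∈ Edges n, ∑ v ∈ S, if v ∈ e then x e else 0 := by
        simp_rw [hrw]; exact Finset.sum_comm
    _ = ∑ e ∈ Edges n, ((if e ∈ inSet n S then 2 * x e else 0)
          + (if e ∈ cutSet n S then x e else 0)) := Finset.sum_congr rfl hpt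
    _ = 2 * (∑ e ∈ inSet n S, x e) + ∑ e ∈ cutSet n S, x e := by
        have h1 : inSet n S ⊆ Edges n := Finset.filter_subset _ _
        have h2 : cutSet n S ⊆ Edges n := Finset.filter_subset _ _
        rw [Finset.sum_add_distrib, Finset.sum_ite_mem, Finset.sum_ite_mem,
          Finset.inter_eq_right.mpr h1, Finset.inter_eq_right.mpr h2, Finset.mul_sum]

/-- (Cycles of nearly integral edges are long.) Any cycle through
`k ≥ 3` distinct vertices all of whose edges `e` satisfy `x_e ≥ 1 − γ` has length
`k ≥ 1/γ`. -/
theorem nearly_integral_cycles_long (n : ℕ) (hn : 2 ≤ n) (s t : Fin n) (hst : s ≠ t)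
    (x : Sym2 (Fin n) → ℝ) (hx : HKPathFeasible n s t x)
    (γ : ℝ) (hγ0 : 0 < γ) (hγ1 : γ < 1)
    (C : List (Fin n)) (hnodup : C.Nodup) (hlen : 3 ≤ C.length)
    (hedges : ∀ p ∈ C.zip (C.rotate 1), 1 - γ ≤ x (Function.uncurry Sym2.mk p)) :
    1 / γ ≤ (C.length : ℝ) := by
  classical
  set k := C.length with hkdef
  set S := C.toFinset with hSdef
  obtain ⟨hx0, hxs, hxt, hxdeg, hxcut1, hxcut2⟩ := hx
  have hk3 : 3 ≤ k := hlen
  have hkpos : 0 < k := by omega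
  have hkcard : S.card = k := List.toFinset_card_of_nodup hnodup
  have hmod : ∀ m : ℕ, m < k → (m + 1) % k = if m + 1 = k then 0 else m + 1 := by
    intro m hm
    split
    · next h => rw [h, Nat.mod_self]
    · next h => exact Nat.mod_eq_of_lt (by omega)
  have hmodlt : ∀ m : ℕ, (m + 1) % k < k := fun m => Nat.mod_lt _ hkpos
  -- the cycle edges
  set g : Fin k → Sym2 (Fin n) :=
    fun i => s(C[(i : ℕ)]'i.isLt, C[((i : ℕ) + 1) % k]'(hmodlt i)) with hgdef
  have hgetinj : ∀ (p q : ℕ) (hp : p < k) (hq : q < k), C[p]'hp = C[q]'hq → p = q := by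
    intro p q hp hq h
    exact (List.Nodup.getElem_inj_iff hnodup).mp h
  have hinj : Function.Injective g := by
    intro i j hij
    have hik := i.isLt
    have hjk := j.isLt
    rw [hgdef] at hij
    simp only [Sym2.eq_iff] at hij
    rcases hij with ⟨h1, _⟩ | ⟨h1, h2⟩
    · exact Fin.ext (hgetinj _ _ _ _ h1)
    · exfalso
      have e1 := hgetinj _ _ _ _ h1
      have e2 := hgetinj _ _ _ _ h2
      rw [hmod _ hjk] at e1
      rw [hmod _ hik] at e2
      split at e1 <;> split at e2 <;> omega
  have hgIn : ∀ i : Fin k, g i ∈ inSet n S := by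
    intro i
    have hik := i.isLt
    have hne : C[(i : ℕ)]'i.isLt ≠ C[((i : ℕ) + 1) % k]'(hmodlt i) := by
      intro h
      have := hgetinj _ _ _ _ h
      rw [hmod _ hik] at this
      split at this <;> omega
    rw [hgdef]
    rw [mem_inSet_iff hne]
    constructor <;> · rw [hSdef, List.mem_toFinset]; exact List.getElem_mem _
  -- membership of pairs in the zip list
  have hzl : (C.zip (C.rotate 1)).length = k := by
    rw [List.length_zip, List.length_rotate]; exact min_self _
  have hmem : ∀ i : Fin k,
      (C[(i : ℕ)]'i.isLt, C[((i : ℕ) + 1) % k]'(hmodlt i)) ∈ C.zip (C.rotate 1) := by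
    intro i
    have hilt : (i : ℕ) < (C.zip (C.rotate 1)).length := by rw [hzl]; exact i.isLt
    have hrot : (C.rotate 1)[(i : ℕ)]'(by rw [List.length_rotate]; exact i.isLt)
        = C[((i : ℕ) + 1) % k]'(hmodlt i) := by
      have := List.get_rotate C 1 ⟨(i : ℕ), by rw [List.length_rotate]; exact i.isLt⟩
      simpa [hkdef] using this
    have : (C.zip (C.rotate 1))[(i : ℕ)]'hilt
        = (C[(i : ℕ)]'i.isLt, C[((i : ℕ) + 1) % k]'(hmodlt i)) := by
      rw [List.getElem_zip, hrot]
    rw [← this]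
    exact List.getElem_mem _
  -- lower bound on the inner mass
  have hA1 : (k : ℝ) * (1 - γ) ≤ ∑ e ∈ inSet n S, x e := by
    have hsub : (Finset.univ : Finset (Fin k)).image g ⊆ inSet n S := by
      intro e he
      obtain ⟨i, -, rfl⟩ := Finset.mem_image.mp he
      exact hgIn i
    have h1 : ∑ i : Fin k, x (g i) ≤ ∑ e ∈ inSet n S, x e := by
      rw [← Finset.sum_image (fun a _ b _ h => hinj h)]
      exact Finset.sum_le_sum_of_subset_of_nonneg hsub (fun e _ _ => hx0 e)
    have h2 : (k : ℝ) * (1 - γ) ≤ ∑ i : Fin k, x (g i) := by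
      calc (k : ℝ) * (1 - γ) = ∑ _i : Fin k, (1 - γ) := by
            rw [Finset.sum_const, Finset.card_univ, Fintype.card_fin, nsmul_eq_mul]
        _ ≤ ∑ i : Fin k, x (g i) :=
            Finset.sum_le_sum (fun i _ => hedges _ (hmem i))
    linarith
  -- degree sum over S
  have hD : ∑ v ∈ S, ∑ e ∈ cutSet n {v}, x e
      = 2 * (k : ℝ) - (if s ∈ S then 1 else 0) - (if t ∈ S then 1 else 0) := by
    have hpt : ∀ v ∈ S, ∑ e ∈ cutSet n {v}, x e
        = 2 - (if v = s then (1 : ℝ) else 0) - (if v = t then 1 else 0) := by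
      intro v _
      by_cases hvs : v = s
      · subst hvs
        have : v ≠ t := hst
        simp only [hxs, if_pos rfl, if_neg this]
        norm_num
      · by_cases hvt : v = t
        · subst hvt
          simp only [hxt, if_neg hvs, if_pos rfl]
          norm_num
        · simp only [hxdeg v hvs hvt, if_neg hvs, if_neg hvt]
          norm_num
    rw [Finset.sum_congr rfl hpt]
    rw [Finset.sum_sub_distrib, Finset.sum_sub_distrib, Finset.sum_const,
      Finset.sum_ite_eq' S s (fun _ => (1 : ℝ)), Finset.sum_ite_eq' S t (fun _ => (1 : ℝ)),
      hkcard, nsmul_eq_mul]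
    ring
  -- cut lower bound
  have hSne : S.Nonempty := by
    rw [← Finset.card_pos, hkcard]; omega
  have hc0 : (0 : ℝ) ≤ ∑ e ∈ cutSet n S, x e := Finset.sum_nonneg fun e _ => hx0 e
  have hcut : (2 : ℝ) - (if s ∈ S then 1 else 0) - (if t ∈ S then 1 else 0)
      ≤ ∑ e ∈ cutSet n S, x e := by
    by_cases hsS : s ∈ S <;> by_cases htS : t ∈ S
    · rw [if_pos hsS, if_pos htS]
      linarith
    · have hne : S ≠ Finset.univ := fun h => htS (h ▸ Finset.mem_univ t)
      have := hxcut1 S hSne hne (Or.inl ⟨hsS, htS⟩)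
      rw [if_pos hsS, if_neg htS]
      linarith
    · have hne : S ≠ Finset.univ := fun h => hsS (h ▸ Finset.mem_univ s)
      have := hxcut1 S hSne hne (Or.inr ⟨hsS, htS⟩)
      rw [if_neg hsS, if_pos htS]
      linarith
    · have hne : S ≠ Finset.univ := fun h => hsS (h ▸ Finset.mem_univ s)
      have := hxcut2 S hSne hne (by tauto)
      rw [if_neg hsS, if_neg htS]
      linarith
  have hmain := handshake n S x
  have hkg : 1 ≤ (k : ℝ) * γ := by nlinarith
  rw [div_le_iff₀ hγ0]
  exact hkg

end
end TSPPath
end
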